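/- Let L>0, let 0 ≤ x₁ < x₂ < ... < x_n < 2L, and let f : ℝ → ℂ be 2L-periodic, twice continuously differentiable on each open interval between consecutive points of the set {x_j + 2Lm : 1 ≤ j ≤ n, m ∈ ℤ}, with f and its first two derivatives having finite one-sided limits at each such point. Set δ_j = f(x_j⁺) − f(x_j⁻). Then there exists C > 0 such that for every nonzero integer k, |f̂_k − (1/(2πik)) Σ_{j=1}^n δ_j e^{−iπ k x_j/L}| ≤ C/k². -/

import Mathlib

set_option autoImplicit false

open MeasureTheory Filter Topology
open Set intervalIntegral

lemma aux_ext {g : ℝ → ℂ} {a b : ℝ} (hab : a < b) (hg : ContinuousOn g (Set.Ioo a b))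
    {la lb : ℂ} (hla : Tendsto g (𝓝[>] a) (𝓝 la)) (hlb : Tendsto g (𝓝[<] b) (𝓝 lb)) :
    ∃ F : ℝ → ℂ, ContinuousOn F (Set.Icc a b) ∧ ∀ x ∈ Set.Ioo a b, F x = g x := by
  refine ⟨Function.update (Function.update g a la) b lb, ?_, ?_⟩
  · rw [continuousOn_update_iff, continuousOn_update_iff, Icc_sdiff_right, Ico_sdiff_left]
    refine ⟨⟨fun z hz => ((hg.continuousAt (Ioo_mem_nhds hz.1 hz.2))).continuousWithinAt, ?_⟩, ?_⟩
    · exact fun _ => hla.mono_left (nhdsWithin_mono _ Ioo_subset_Ioi_self)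
    · rintro -
      refine (hlb.congr' ?_).mono_left (nhdsWithin_mono _ Ico_subset_Iio_self)
      filter_upwards [Ioo_mem_nhdsLT_of_mem (right_mem_Ioc.2 hab)] with z hz using
        (Function.update_of_ne hz.1.ne' _ _).symm
  · intro z hz
    rw [Function.update_of_ne hz.2.ne, Function.update_of_ne hz.1.ne']

lemma aux_int {g : ℝ → ℂ} {a b : ℝ} (hab : a < b) (hg : ContinuousOn g (Set.Ioo a b))
    {la lb : ℂ} (hla : Tendsto g (𝓝[>] a) (𝓝 la)) (hlb : Tendsto g (𝓝[<] b) (𝓝 lb)) :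
    IntervalIntegrable g MeasureTheory.volume a b ∧
      ∃ M > 0, ∀ x ∈ Set.Ioo a b, ‖g x‖ ≤ M := by
  obtain ⟨F, hF, hFg⟩ := aux_ext hab hg hla hlb
  have hFi : IntervalIntegrable F MeasureTheory.volume a b := by
    apply ContinuousOn.intervalIntegrable
    rwa [uIcc_of_le hab.le]
  constructor
  · rw [intervalIntegrable_iff_integrableOn_Ioc_of_le hab.le] at hFi ⊢
    rw [integrableOn_Ioc_iff_integrableOn_Ioo] at hFi ⊢
    exact hFi.congr_fun (fun z hz => hFg z hz) measurableSet_Ioo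
  · obtain ⟨M, hM⟩ := isCompact_Icc.exists_bound_of_continuousOn hF
    refine ⟨max M 1, lt_of_lt_of_le one_pos (le_max_right _ _), fun z hz => ?_⟩
    rw [← hFg z hz]
    exact le_trans (hM z (Ioo_subset_Icc_self hz)) (le_max_left _ _)

lemma aux_ibp {g g' : ℝ → ℂ} {a b : ℝ} (hab : a < b) {c : ℂ} (hc : c ≠ 0)
    (hderiv : ∀ x ∈ Set.Ioo a b, HasDerivAt g (g' x) x)
    (hg'c : ContinuousOn g' (Set.Ioo a b))
    {ga gb g'a g'b : ℂ}
    (Hga : Tendsto g (𝓝[>] a) (𝓝 ga)) (Hgb : Tendsto g (𝓝[<] b) (𝓝 gb))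
    (Hg'a : Tendsto g' (𝓝[>] a) (𝓝 g'a)) (Hg'b : Tendsto g' (𝓝[<] b) (𝓝 g'b)) :
    ∫ x in a..b, g x * Complex.exp (c * x) =
      (gb * Complex.exp (c * b) - ga * Complex.exp (c * a)) / c
        - (1/c) * ∫ x in a..b, g' x * Complex.exp (c * x) := by
  set E : ℝ → ℂ := fun x => Complex.exp (c * x) with hE
  have hEcont : Continuous E :=
    Complex.continuous_exp.comp (continuous_const.mul Complex.continuous_ofReal)
  have hEd : ∀ x : ℝ, HasDerivAt E (c * E x) x := by
    intro x
    have h1 : HasDerivAt (fun y : ℂ => Complex.exp (c * y)) (c * Complex.exp (c * x)) x := by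
      have h0 := ((hasDerivAt_id (x : ℂ)).const_mul c).cexp
      rw [show c * Complex.exp (c * x) = Complex.exp (c * id (x:ℂ)) * (c * 1) by simp [mul_comm]]
      exact h0
    exact h1.comp_ofReal
  have hEta : ∀ t : ℝ, Tendsto E (𝓝[>] t) (𝓝 (E t)) :=
    fun t => (hEcont.tendsto t).mono_left nhdsWithin_le_nhds
  have hEtb : ∀ t : ℝ, Tendsto E (𝓝[<] t) (𝓝 (E t)) :=
    fun t => (hEcont.tendsto t).mono_left nhdsWithin_le_nhds
  have hgc : ContinuousOn g (Set.Ioo a b) :=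
    fun z hz => (hderiv z hz).continuousAt.continuousWithinAt
  have intG : IntervalIntegrable (fun x => g x * E x) MeasureTheory.volume a b :=
    (aux_int hab (hgc.mul (hEcont.continuousOn)) (Hga.mul (hEta a)) (Hgb.mul (hEtb b))).1
  have intG' : IntervalIntegrable (fun x => g' x * E x) MeasureTheory.volume a b :=
    (aux_int hab (hg'c.mul (hEcont.continuousOn)) (Hg'a.mul (hEta a)) (Hg'b.mul (hEtb b))).1
  have hGd : ∀ x ∈ Set.Ioo a b,
      HasDerivAt (fun x => g x * E x / c) (g' x * E x / c + g x * E x) x := by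
    intro x hx
    have h2 := ((hderiv x hx).mul (hEd x)).div_const c
    exact h2.congr_deriv (by rw [add_div, mul_left_comm (g x), mul_div_cancel_left₀ _ hc])
  have intC : IntervalIntegrable (fun x => g' x * E x / c + g x * E x)
      MeasureTheory.volume a b := (intG'.div_const c).add intG
  have key : ∫ x in a..b, (g' x * E x / c + g x * E x) =
      gb * E b / c - ga * E a / c := by
    apply integral_eq_sub_of_hasDerivAt_of_tendsto hab hGd intC
    · exact ((Hga.mul (hEta a)).div_const c)
    · exact ((Hgb.mul (hEtb b)).div_const c)
  rw [integral_add (intG'.div_const c) intG, intervalIntegral.integral_div] at key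
  have : ∫ x in a..b, g x * E x =
      (gb * E b - ga * E a) / c - (1/c) * ∫ x in a..b, g' x * E x := by
    linear_combination key
  exact this

lemma aux_piece {f : ℝ → ℂ} {a b : ℝ} (hab : a < b)
    (hf : ContDiffOn ℝ 2 f (Set.Ioo a b))
    {fa fb : ℂ}
    (Hfa : Tendsto f (𝓝[>] a) (𝓝 fa)) (Hfb : Tendsto f (𝓝[<] b) (𝓝 fb))
    (H1a : ∃ l, Tendsto (deriv f) (𝓝[>] a) (𝓝 l))
    (H1b : ∃ l, Tendsto (deriv f) (𝓝[<] b) (𝓝 l))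
    (H2a : ∃ l, Tendsto (deriv (deriv f)) (𝓝[>] a) (𝓝 l))
    (H2b : ∃ l, Tendsto (deriv (deriv f)) (𝓝[<] b) (𝓝 l)) :
    ∃ M > 0, ∀ c : ℂ, c ≠ 0 → (∀ t : ℝ, ‖Complex.exp (c * t)‖ = 1) →
      IntervalIntegrable (fun x => f x * Complex.exp (c * x)) MeasureTheory.volume a b ∧
      ‖(∫ x in a..b, f x * Complex.exp (c * x)) -
          (fb * Complex.exp (c * b) - fa * Complex.exp (c * a)) / c‖ ≤ M / ‖c‖^2 := by
  obtain ⟨l1a, h1a⟩ := H1a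
  obtain ⟨l1b, h1b⟩ := H1b
  obtain ⟨l2a, h2a⟩ := H2a
  obtain ⟨l2b, h2b⟩ := H2b
  have hopen : IsOpen (Set.Ioo a b) := isOpen_Ioo
  have hf' : ContDiffOn ℝ 1 (deriv f) (Set.Ioo a b) :=
    hf.deriv_of_isOpen (m := 1) hopen (by norm_num)
  have hf'' : ContinuousOn (deriv (deriv f)) (Set.Ioo a b) :=
    (hf'.deriv_of_isOpen (m := 0) hopen (by norm_num)).continuousOn
  have hd1 : ∀ x ∈ Set.Ioo a b, HasDerivAt f (deriv f x) x := fun x hx =>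
    (((hf x hx).contDiffAt (hopen.mem_nhds hx)).differentiableAt (by norm_num)).hasDerivAt
  have hd2 : ∀ x ∈ Set.Ioo a b, HasDerivAt (deriv f) (deriv (deriv f) x) x := fun x hx =>
    (((hf' x hx).contDiffAt (hopen.mem_nhds hx)).differentiableAt (by norm_num)).hasDerivAt
  obtain ⟨-, M2, hM2pos, hM2⟩ := aux_int hab hf'' h2a h2b
  have hba : (0:ℝ) < b - a := sub_pos.mpr hab
  refine ⟨‖l1a‖ + ‖l1b‖ + M2 * (b - a) + 1,
    by nlinarith [norm_nonneg l1a, norm_nonneg l1b, mul_pos hM2pos hba], fun c hc hnorm => ?_⟩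
  have hEcont : Continuous (fun x : ℝ => Complex.exp (c * x)) :=
    Complex.continuous_exp.comp (continuous_const.mul Complex.continuous_ofReal)
  have hEta : ∀ t : ℝ, Tendsto (fun x : ℝ => Complex.exp (c * x)) (𝓝[>] t)
      (𝓝 (Complex.exp (c * t))) := fun t => (hEcont.tendsto t).mono_left nhdsWithin_le_nhds
  have hEtb : ∀ t : ℝ, Tendsto (fun x : ℝ => Complex.exp (c * x)) (𝓝[<] t)
      (𝓝 (Complex.exp (c * t))) := fun t => (hEcont.tendsto t).mono_left nhdsWithin_le_nhds
  have int1 : IntervalIntegrable (fun x => f x * Complex.exp (c * x))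
      MeasureTheory.volume a b :=
    (aux_int hab (hf.continuousOn.mul hEcont.continuousOn)
      (Hfa.mul (hEta a)) (Hfb.mul (hEtb b))).1
  refine ⟨int1, ?_⟩
  have eq1 := aux_ibp hab hc hd1 hf'.continuousOn Hfa Hfb h1a h1b
  have eq2 := aux_ibp hab hc hd2 hf'' h1a h1b h2a h2b
  have heq : (∫ x in a..b, f x * Complex.exp (c * x)) -
      (fb * Complex.exp (c * b) - fa * Complex.exp (c * a)) / c =
      ((∫ x in a..b, deriv (deriv f) x * Complex.exp (c * x)) -
        (l1b * Complex.exp (c * b) - l1a * Complex.exp (c * a))) / c^2 := by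
    rw [eq1, eq2]
    field_simp
    ring
  rw [heq, norm_div, norm_pow]
  have hKb : ‖∫ x in a..b, deriv (deriv f) x * Complex.exp (c * x)‖ ≤ M2 * (b - a) := by
    have hae : ∀ᵐ (x : ℝ), x ∈ Set.uIoc a b → ‖deriv (deriv f) x * Complex.exp (c * x)‖ ≤ M2 := by
      filter_upwards [measure_eq_zero_iff_ae_notMem.mp (measure_singleton b)] with x hx hxI
      rw [Set.uIoc_of_le hab.le] at hxI
      have hxo : x ∈ Set.Ioo a b := ⟨hxI.1, lt_of_le_of_ne hxI.2 hx⟩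
      rw [norm_mul, hnorm x, mul_one]
      exact hM2 x hxo
    have := intervalIntegral.norm_integral_le_of_norm_le_const_ae hae
    rwa [abs_of_nonneg (by linarith : (0:ℝ) ≤ b - a)] at this
  have hBb : ‖l1b * Complex.exp (c * b) - l1a * Complex.exp (c * a)‖ ≤ ‖l1b‖ + ‖l1a‖ := by
    refine le_trans (norm_sub_le _ _) ?_
    rw [norm_mul, norm_mul, hnorm a, hnorm b, mul_one, mul_one]
  have h1 : ‖(∫ x in a..b, deriv (deriv f) x * Complex.exp (c * x)) -
      (l1b * Complex.exp (c * b) - l1a * Complex.exp (c * a))‖ ≤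
      ‖l1a‖ + ‖l1b‖ + M2 * (b - a) + 1 := by
    refine le_trans (norm_sub_le _ _) ?_
    linarith
  exact (div_le_div_iff_of_pos_right (pow_pos (norm_pos_iff.mpr hc) 2)).mpr h1

/-- The `k`-th Fourier coefficient of a `2L`-periodic function:
`f̂ₖ = (1/(2L)) ∫₀^{2L} f(x) e^{−iπkx/L} dx`. -/
noncomputable def fourierCoeff2L (L : ℝ) (f : ℝ → ℂ) (k : ℤ) : ℂ :=
  (1 / (2 * L : ℂ)) * ∫ x in (0:ℝ)..(2 * L),
    f x * Complex.exp (-(Real.pi * Complex.I * k * x) / L)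

/-- For a `2L`-periodic function, piecewise `C²` with jump discontinuities at the points
`x_j + 2Lm`, the Fourier coefficients satisfy
`f̂ₖ = (1/(2πik)) Σⱼ δⱼ e^{−iπk xⱼ/L} + O(1/k²)`, where `δⱼ` is the jump of `f` at `xⱼ`. -/

theorem fourierCoeff_jump_asymptotics
    (L : ℝ) (hL : 0 < L) (n : ℕ) (hn : 0 < n) (x : Fin n → ℝ)
    (hxmono : StrictMono x) (hxrange : ∀ j, 0 ≤ x j ∧ x j < 2 * L)
    (f : ℝ → ℂ) (hper : ∀ y, f (y + 2 * L) = f y)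
    (D : Set ℝ) (hD : D = {y : ℝ | ∃ j : Fin n, ∃ m : ℤ, y = x j + 2 * L * m})
    (hsmooth : ContDiffOn ℝ 2 f Dᶜ)
    (hlim : ∀ d ∈ D, ∀ g ∈ ({f, deriv f, deriv (deriv f)} : Set (ℝ → ℂ)),
      (∃ l : ℂ, Tendsto g (nhdsWithin d (Set.Iio d)) (nhds l)) ∧
      (∃ r : ℂ, Tendsto g (nhdsWithin d (Set.Ioi d)) (nhds r)))
    (fl fr : Fin n → ℂ)
    (hfl : ∀ j, Tendsto f (nhdsWithin (x j) (Set.Iio (x j))) (nhds (fl j)))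
    (hfr : ∀ j, Tendsto f (nhdsWithin (x j) (Set.Ioi (x j))) (nhds (fr j))) :
    ∃ C > 0, ∀ k : ℤ, k ≠ 0 →
      ‖fourierCoeff2L L f k -
        (1 / (2 * Real.pi * Complex.I * k)) *
          ∑ j, (fr j - fl j) * Complex.exp (-(Real.pi * Complex.I * k * (x j)) / L)‖
        ≤ C / (k : ℝ) ^ 2 := by
  have hLC : (L : ℂ) ≠ 0 := Complex.ofReal_ne_zero.mpr hL.ne'
  have hpi : (0:ℝ) < Real.pi := Real.pi_pos
  set x0 : ℝ := x ⟨0, hn⟩ with hx0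
  set a : ℕ → ℝ := fun i => if h : i < n then x ⟨i, h⟩ else x0 + 2 * L with ha
  have ha0 : a 0 = x0 := by simp [ha, hn, hx0]
  have han : a n = x0 + 2 * L := by simp [ha]
  have hai : ∀ i (h : i < n), a i = x ⟨i, h⟩ := fun i h => by simp [ha, h]
  have hx0le : ∀ j : Fin n, x0 ≤ x j := fun j => hxmono.monotone (by simp [Fin.le_def])
  have hx0r := hxrange ⟨0, hn⟩
  have hstep : ∀ i, i < n → a i < a (i + 1) := by
    intro i hi
    rcases lt_or_eq_of_le (Nat.succ_le_of_lt hi) with h | h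
    · rw [hai i hi, hai (i+1) h]
      exact hxmono (by simp [Fin.lt_def])
    · have h' : a (i+1) = x0 + 2 * L := by rw [show i+1 = n from h]; exact han
      rw [hai i hi, h']
      have := (hxrange ⟨i, hi⟩).2
      have := hx0r.1
      linarith
  have halow : ∀ i, i < n → x0 ≤ a i := by
    intro i hi; rw [hai i hi]; exact hx0le _
  have hahigh : ∀ i, i ≤ n → a i ≤ x0 + 2 * L := by
    intro i hi
    rcases lt_or_eq_of_le hi with h | h
    · rw [hai i h]
      have := (hxrange ⟨i, h⟩).2
      have := hx0r.1
      linarith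
    · rw [h, han]
  -- pieces avoid D
  have hsub : ∀ i, i < n → Set.Ioo (a i) (a (i+1)) ⊆ Dᶜ := by
    intro i hi y hy hyD
    rw [hD] at hyD
    obtain ⟨j, m, rfl⟩ := hyD
    have hylow : x0 < x j + 2 * L * m := lt_of_le_of_lt (halow i hi) hy.1
    have hyhigh : x j + 2 * L * m < x0 + 2 * L :=
      lt_of_lt_of_le hy.2 (hahigh (i+1) hi)
    have hj1 := (hxrange j).1
    have hj2 := (hxrange j).2
    have hm0 : (0:ℤ) ≤ m := by
      by_contra hmc
      push_neg at hmc
      have hm' : m ≤ -1 := by omega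
      have : (m:ℝ) ≤ -1 := by exact_mod_cast hm'
      nlinarith [hx0r.1]
    have hm1 : m ≤ 1 := by
      by_contra hmc
      push_neg at hmc
      have : (2:ℝ) ≤ (m:ℝ) := by exact_mod_cast hmc
      nlinarith [hx0r.2]
    interval_cases m
    · -- m = 0
      simp only [Int.cast_zero, mul_zero, add_zero] at hy
      rcases le_or_gt (j:ℕ) i with hji | hji
      · have : x j ≤ a i := by
          rw [hai i hi]; exact hxmono.monotone (by simp [Fin.le_def, hji])
        exact absurd hy.1 (not_lt.mpr this)
      · have hi1 : i + 1 < n := lt_of_le_of_lt hji j.isLt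
        have : a (i+1) ≤ x j := by
          rw [hai (i+1) hi1]; exact hxmono.monotone (by simp [Fin.le_def]; omega)
        exact absurd hy.2 (not_lt.mpr this)
    · -- m = 1
      have : x0 + 2 * L ≤ x j + 2 * L * 1 := by
        have := hx0le j; push_cast; linarith
      have h2 := lt_of_lt_of_le hy.2 (hahigh (i+1) hi)
      push_cast at h2
      linarith [hx0le j]
  have haD : ∀ i, i ≤ n → a i ∈ D := by
    intro i hi
    rw [hD]
    rcases lt_or_eq_of_le hi with h | h
    · exact ⟨⟨i, h⟩, 0, by rw [hai i h]; push_cast; ring⟩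
    · exact ⟨⟨0, hn⟩, 1, by rw [h, han]; push_cast; ring⟩
  have hfmem : f ∈ ({f, deriv f, deriv (deriv f)} : Set (ℝ → ℂ)) := by simp
  have hf1mem : deriv f ∈ ({f, deriv f, deriv (deriv f)} : Set (ℝ → ℂ)) := by simp
  have hf2mem : deriv (deriv f) ∈ ({f, deriv f, deriv (deriv f)} : Set (ℝ → ℂ)) := by simp
  -- endpoint limit data
  set FB : ℕ → ℂ := fun i => fl ⟨i % n, Nat.mod_lt i hn⟩ with hFB
  set FR : ℕ → ℂ := fun i => fr ⟨i % n, Nat.mod_lt i hn⟩ with hFR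
  set X : ℕ → ℝ := fun i => x ⟨i % n, Nat.mod_lt i hn⟩ with hX
  have hFRlim : ∀ i, i < n → Tendsto f (𝓝[>] (a i)) (𝓝 (FR i)) := by
    intro i hi
    rw [hai i hi]
    have hre : FR i = fr ⟨i, hi⟩ := congrArg fr (Fin.ext (by simp [Nat.mod_eq_of_lt hi]))
    rw [hre]
    exact hfr ⟨i, hi⟩
  -- left limit of f at x0 + 2L is fl ⟨0⟩, by periodicity
  have hshift : Tendsto f (𝓝[<] (x0 + 2*L)) (𝓝 (fl ⟨0, hn⟩)) := by
    have hmap : Tendsto (fun y : ℝ => y - 2*L) (𝓝[<] (x0 + 2*L)) (𝓝[<] x0) := by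
      apply tendsto_nhdsWithin_of_tendsto_nhds_of_eventually_within
      · have : Tendsto (fun y : ℝ => y - 2*L) (𝓝 (x0 + 2*L)) (𝓝 (x0 + 2*L - 2*L)) :=
          (continuous_id.sub continuous_const).tendsto _
        rw [add_sub_cancel_right] at this
        exact this.mono_left nhdsWithin_le_nhds
      · filter_upwards [self_mem_nhdsWithin] with y hy
        simp only [Set.mem_Iio] at hy ⊢
        linarith
    have := (hfl ⟨0, hn⟩).comp hmap
    refine this.congr fun y => ?_
    simp only [Function.comp_apply]
    have h2 := hper (y - 2*L)
    rw [sub_add_cancel] at h2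
    exact h2.symm
  have hFBlim : ∀ i, i < n → Tendsto f (𝓝[<] (a (i+1))) (𝓝 (FB (i+1))) := by
    intro i hi
    rcases lt_or_eq_of_le (Nat.succ_le_of_lt hi) with h | h
    · rw [hai (i+1) h]
      have hre : FB (i+1) = fl ⟨i+1, h⟩ := congrArg fl (Fin.ext (by simp [Nat.mod_eq_of_lt h]))
      rw [hre]
      exact hfl ⟨i+1, h⟩
    · have h' : a (i+1) = x0 + 2 * L := by rw [show i+1 = n from h]; exact han
      have hre : FB (i+1) = fl ⟨0, hn⟩ := congrArg fl (Fin.ext (by simp [show i+1 = n from h]))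
      rw [h', hre]
      exact hshift
  -- per-piece estimates
  have key : ∀ i : ℕ, ∃ M, 0 < M ∧ (i < n →
      ∀ c : ℂ, c ≠ 0 → (∀ t : ℝ, ‖Complex.exp (c * t)‖ = 1) →
      IntervalIntegrable (fun y => f y * Complex.exp (c * y)) MeasureTheory.volume (a i) (a (i+1)) ∧
      ‖(∫ y in (a i)..(a (i+1)), f y * Complex.exp (c * y)) -
          (FB (i+1) * Complex.exp (c * (a (i+1))) - FR i * Complex.exp (c * (a i))) / c‖
        ≤ M / ‖c‖^2) := by
    intro i
    by_cases hi : i < n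
    · have hab := hstep i hi
      have hmemi := haD i (le_of_lt hi)
      have hmemi1 := haD (i+1) hi
      obtain ⟨M, hMpos, hM⟩ := aux_piece hab
        (hsmooth.mono (hsub i hi))
        (hFRlim i hi) (hFBlim i hi)
        ((hlim (a i) hmemi (deriv f) hf1mem).2)
        ((hlim (a (i+1)) hmemi1 (deriv f) hf1mem).1)
        ((hlim (a i) hmemi (deriv (deriv f)) hf2mem).2)
        ((hlim (a (i+1)) hmemi1 (deriv (deriv f)) hf2mem).1)
      exact ⟨M, hMpos, fun _ => hM⟩
    · exact ⟨1, one_pos, fun h => absurd h hi⟩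
  choose M hMpos hMb using key
  set Msum : ℝ := ∑ i ∈ Finset.range n, M i with hMsum
  have hMsumpos : 0 < Msum := Finset.sum_pos (fun i _ => hMpos i)
    (Finset.nonempty_range_iff.mpr hn.ne')
  refine ⟨Msum * L / (2 * Real.pi^2), by positivity, fun k hk => ?_⟩
  have hkR : ((k:ℝ)) ≠ 0 := Int.cast_ne_zero.mpr hk
  have hkC : ((k:ℂ)) ≠ 0 := Int.cast_ne_zero.mpr hk
  set c : ℂ := -(Real.pi * Complex.I * k) / L with hc
  have hcne : c ≠ 0 := by
    rw [hc]
    exact div_ne_zero (neg_ne_zero.mpr (mul_ne_zero (mul_ne_zero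
      (Complex.ofReal_ne_zero.mpr Real.pi_ne_zero) Complex.I_ne_zero) hkC)) hLC
  have hcx : ∀ t : ℝ, -(Real.pi * Complex.I * k * t) / L = c * t := by
    intro t; rw [hc]; ring
  have hnorm1 : ∀ t : ℝ, ‖Complex.exp (c * t)‖ = 1 := by
    intro t
    rw [show c * (t:ℂ) = ((-(Real.pi * k * t)/L : ℝ):ℂ) * Complex.I by
      rw [hc]; push_cast; ring]
    exact Complex.norm_exp_ofReal_mul_I _
  have hcnormsq : ‖c‖^2 = Real.pi^2 * (k:ℝ)^2 / L^2 := by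
    rw [hc, show ((k:ℤ):ℂ) = (((k:ℤ):ℝ):ℂ) by push_cast; ring]
    rw [norm_div, norm_neg, norm_mul, norm_mul, Complex.norm_real, Complex.norm_I,
      mul_one, Complex.norm_real, Complex.norm_real, Real.norm_eq_abs, Real.norm_eq_abs,
      Real.norm_eq_abs, div_pow, mul_pow, sq_abs, sq_abs, sq_abs]
  have hexp2L : Complex.exp (c * (2*L:ℂ)) = 1 := by
    rw [show c * (2*(L:ℂ)) = (-k:ℤ) * (2 * Real.pi * Complex.I) by
      rw [hc]; push_cast; field_simp]
    exact Complex.exp_int_mul_two_pi_mul_I _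
  have hexpper : ∀ t : ℝ, Complex.exp (c * ((t + 2*L : ℝ):ℂ)) = Complex.exp (c * t) := by
    intro t
    rw [show ((t + 2*L : ℝ):ℂ) = (t:ℂ) + 2*L by push_cast; ring, mul_add,
      Complex.exp_add, hexp2L, mul_one]
  have hPer : Function.Periodic (fun t : ℝ => f t * Complex.exp (c * t)) (2*L) := by
    intro t
    show f (t + 2*L) * Complex.exp (c * ((t + 2*L : ℝ):ℂ)) = _
    rw [hper t, hexpper t]
  set g : ℝ → ℂ := fun t => f t * Complex.exp (c * t) with hg
  have hint : ∀ i, i < n → IntervalIntegrable g MeasureTheory.volume (a i) (a (i+1)) :=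
    fun i hi => (hMb i hi c hcne hnorm1).1
  have hsum_int : ∑ i ∈ Finset.range n, ∫ y in (a i)..(a (i+1)), g y
      = ∫ y in (a 0)..(a n), g y :=
    intervalIntegral.sum_integral_adjacent_intervals hint
  have hfull : (∫ y in (0:ℝ)..(2*L), g y) = ∫ y in (a 0)..(a n), g y := by
    rw [ha0, han]
    have := hPer.intervalIntegral_add_eq 0 x0
    rwa [zero_add] at this
  set Q : ℕ → ℂ := fun i => FB i * Complex.exp (c * (X i)) with hQ
  set R : ℕ → ℂ := fun i => FR i * Complex.exp (c * (X i)) with hR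
  have hb_eq : ∀ i ∈ Finset.range n,
      (FB (i+1) * Complex.exp (c * (a (i+1))) - FR i * Complex.exp (c * (a i)))
        = Q (i+1) - R i := by
    intro i hi'
    have hi : i < n := Finset.mem_range.mp hi'
    have hXi : X i = a i := by
      rw [hai i hi, hX]
      exact congrArg x (Fin.ext (by simp [Nat.mod_eq_of_lt hi]))
    have hRe : R i = FR i * Complex.exp (c * (a i)) := by
      simp only [hR]; rw [hXi]
    rw [hRe]
    congr 1
    rcases lt_or_eq_of_le (Nat.succ_le_of_lt hi) with h | h
    · have hXi1 : X (i+1) = a (i+1) := by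
        rw [hai (i+1) h, hX]
        exact congrArg x (Fin.ext (by simp [Nat.mod_eq_of_lt h]))
      simp only [hQ]; rw [hXi1]
    · have hXn : X (i+1) = x0 := by
        rw [hX]
        exact congrArg x (Fin.ext (by simp [show i+1 = n from h]))
      have han' : a (i+1) = x0 + 2*L := by rw [show i+1 = n from h]; exact han
      simp only [hQ]; rw [hXn, han', hexpper x0]
  have hQrot : ∑ i ∈ Finset.range n, Q (i+1) = ∑ i ∈ Finset.range n, Q i := by
    have h1 := Finset.sum_range_succ' Q n
    have h2 := Finset.sum_range_succ Q n
    have e : (⟨n % n, Nat.mod_lt n hn⟩ : Fin n) = ⟨0 % n, Nat.mod_lt 0 hn⟩ :=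
      Fin.ext (by simp)
    have h3 : Q n = Q 0 := by
      simp only [hQ, hFB, hX, e]
    linear_combination h2 - h1 + h3
  have hBsum : ∑ i ∈ Finset.range n,
      (FB (i+1) * Complex.exp (c * (a (i+1))) - FR i * Complex.exp (c * (a i)))
      = ∑ j : Fin n, (fl j - fr j) * Complex.exp (c * (x j)) := by
    rw [Finset.sum_congr rfl hb_eq, Finset.sum_sub_distrib, hQrot, ← Finset.sum_sub_distrib]
    rw [← Fin.sum_univ_eq_sum_range (fun i => Q i - R i) n]
    apply Finset.sum_congr rfl
    intro j _
    have e : (⟨(j:ℕ) % n, Nat.mod_lt (j:ℕ) hn⟩ : Fin n) = j :=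
      Fin.ext (by simp [Nat.mod_eq_of_lt j.isLt])
    simp only [hQ, hR, hFB, hFR, hX, e]
    ring
  have hgint : (∫ y in (0:ℝ)..(2*L),
      f y * Complex.exp (-(Real.pi * Complex.I * k * y) / L)) = ∫ y in (0:ℝ)..(2*L), g y := by
    apply intervalIntegral.integral_congr
    intro y _
    rw [hg]
    simp only
    rw [hcx y]
  have hmain : fourierCoeff2L L f k -
      (1 / (2 * Real.pi * Complex.I * k)) *
        ∑ j, (fr j - fl j) * Complex.exp (-(Real.pi * Complex.I * k * (x j)) / L)
      = (1/(2*L:ℂ)) * ∑ i ∈ Finset.range n,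
          ((∫ y in (a i)..(a (i+1)), g y) -
            (FB (i+1) * Complex.exp (c * (a (i+1))) - FR i * Complex.exp (c * (a i))) / c) := by
    rw [Finset.sum_sub_distrib, hsum_int, ← hfull, fourierCoeff2L, hgint, mul_sub]
    congr 1
    rw [← Finset.sum_div, hBsum]
    simp only [hcx]
    have hnegS : ∑ j : Fin n, (fl j - fr j) * Complex.exp (c * (x j))
        = -∑ j : Fin n, (fr j - fl j) * Complex.exp (c * (x j)) := by
      rw [← Finset.sum_neg_distrib]
      exact Finset.sum_congr rfl (fun j _ => by ring)
    rw [hnegS]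
    set S := ∑ j : Fin n, (fr j - fl j) * Complex.exp (c * (x j)) with hS
    rw [hc]
    have hπ : (Real.pi : ℂ) ≠ 0 := Complex.ofReal_ne_zero.mpr Real.pi_ne_zero
    field_simp
  rw [hmain, norm_mul]
  have hnormC : ‖(1/(2*L:ℂ))‖ = 1/(2*L) := by
    rw [show (2*(L:ℂ)) = ((2*L:ℝ):ℂ) by push_cast; ring]
    rw [norm_div, norm_one, Complex.norm_real, Real.norm_eq_abs, abs_of_pos (by linarith)]
  rw [hnormC]
  have hbound : ‖∑ i ∈ Finset.range n,
      ((∫ y in (a i)..(a (i+1)), g y) -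
        (FB (i+1) * Complex.exp (c * (a (i+1))) - FR i * Complex.exp (c * (a i))) / c)‖
      ≤ Msum / ‖c‖^2 := by
    rw [hMsum, Finset.sum_div]
    refine (norm_sum_le _ _).trans (Finset.sum_le_sum fun i hi => ?_)
    exact (hMb i (Finset.mem_range.mp hi) c hcne hnorm1).2
  have hfin : (1/(2*L)) * (Msum / ‖c‖^2) = Msum * L / (2 * Real.pi^2) / (k:ℝ)^2 := by
    rw [hcnormsq]
    field_simp
  calc (1/(2*L)) * ‖∑ i ∈ Finset.range n,
      ((∫ y in (a i)..(a (i+1)), g y) -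
        (FB (i+1) * Complex.exp (c * (a (i+1))) - FR i * Complex.exp (c * (a i))) / c)‖
      ≤ (1/(2*L)) * (Msum / ‖c‖^2) := by
        apply mul_le_mul_of_nonneg_left hbound (by positivity)
    _ = Msum * L / (2 * Real.pi^2) / (k:ℝ)^2 := hfin
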